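/- Let S be a compact Hausdorff space with an associative operation * such that each right translation r_q(p) = p * q is continuous, and let I be a minimal nonempty closed left ideal of S. Then I contains an idempotent p₀ such that q * p₀ = q for all q ∈ I. -/
import Mathlib

/-- A minimal nonempty closed left ideal of a compact Hausdorff right-topological
semigroup contains an idempotent which is a right identity on the ideal. -/
theorem stmt_4 {S : Type*} [TopologicalSpace S] [CompactSpace S] [T2Space S]
    (mul : S → S → S)
    (assoc : ∀ a b c : S, mul (mul a b) c = mul a (mul b c))
    (rcont : ∀ q : S, Continuous fun p : S => mul p q)
    (I : Set S) (hne : I.Nonempty) (hcl : IsClosed I)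
    (hideal : ∀ (p : S), ∀ q ∈ I, mul p q ∈ I)
    (hmin : ∀ L ⊆ I, L.Nonempty → IsClosed L → (∀ (p : S), ∀ q ∈ L, mul p q ∈ L) → L = I) :
    ∃ p₀ ∈ I, mul p₀ p₀ = p₀ ∧ ∀ q ∈ I, mul q p₀ = q := by
  letI : Mul S := ⟨mul⟩
  letI : Semigroup S := ⟨assoc⟩
  obtain ⟨e, heI, he⟩ := exists_idempotent_in_compact_subsemigroup
    (fun r => rcont r) I hne hcl.isCompact (fun x _ y hy => hideal x y hy)
  refine ⟨e, heI, he, ?_⟩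
  have hL : {q ∈ I | mul q e = q} = I := by
    refine hmin _ (fun x hx => hx.1) ⟨e, heI, he⟩
      (hcl.inter (isClosed_eq (rcont e) continuous_id)) ?_
    rintro p q ⟨hqI, hq⟩
    exact ⟨hideal p q hqI, by rw [assoc, hq]⟩
  intro q hq
  rw [← hL] at hq; exact hq.2
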